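/- Let V be a compact subset (in the topology of locally uniform convergence) of the space of functions analytic on D(0,R₁), and let g be analytic on D(0,R₂). Then the set U = { f * g : f ∈ V } of Hadamard products is compact in the space of functions analytic on D(0, R₁R₂). -/

import Mathlib

open Metric Set Filter
open scoped Topology Real NNReal UniformConvergence

noncomputable def coeff (f : ℂ → ℂ) (k : ℕ) : ℂ := iteratedDeriv k f 0 / (k.factorial : ℂ)

noncomputable def hadamard (f g : ℂ → ℂ) : ℂ → ℂ := fun z => ∑' k : ℕ, coeff f k * coeff g k * z ^ k

def Pt (x : ℂ) (f : ℂ → ℂ) : ℂ → ℂ := fun z => f (x * z)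

def A0 : Set (ℂ → ℂ) := {f | AnalyticOnNhd ℂ f (ball (0:ℂ) 1) ∧ f 0 = 1}

def cm (V : Set (ℂ → ℂ)) : Set (ℂ → ℂ) := {h | ∃ f ∈ V, ∃ x : ℂ, ‖x‖ ≤ 1 ∧ h = Pt x f}

def dual (V : Set (ℂ → ℂ)) : Set (ℂ → ℂ) :=
  {g ∈ A0 | ∀ f ∈ V, ∀ z ∈ ball (0:ℂ) 1, hadamard f g z ≠ 0}

def eligible (g : ℂ → ℂ) : Prop := ∃ R > 1, AnalyticOnNhd ℂ g (ball (0:ℂ) R)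

def VT (V : Set (ℂ → ℂ)) : Set (ℂ → ℂ) :=
  {g | eligible g ∧ g 0 = 1 ∧ ∀ f ∈ V, hadamard f g 1 ≠ 0}

def perp (U : Set (ℂ → ℂ)) : Set (ℂ → ℂ) :=
  {h ∈ A0 | ∀ g ∈ U, hadamard g h 1 ≠ 0}

def lamSet (g : ℂ → ℂ) (V : Set (ℂ → ℂ)) : Set ℂ := (fun f => hadamard f g 1) '' V

def S (R : ℝ) : Set (Set ℂ) := {K | K ⊆ ball (0:ℂ) R ∧ IsCompact K}

noncomputable def closLU (R : ℝ) (U : Set (ℂ → ℂ)) : Set (ℂ → ℂ) :=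
  (UniformOnFun.toFun (S R)) '' closure ((UniformOnFun.ofFun (S R)) '' U)

lemma coeff_eq_ps {f : ℂ → ℂ} {p : FormalMultilinearSeries ℂ ℂ ℂ}
    (hp : HasFPowerSeriesAt f p 0) (k : ℕ) : coeff f k = p.coeff k := by
  obtain ⟨r, hr⟩ := hp
  have h := hr.factorial_smul (1 : ℂ) k
  have h2 : iteratedDeriv k f 0 = iteratedFDeriv ℂ k f 0 fun _ => 1 := rfl
  have h3 : (p k fun _ => (1:ℂ)) = p.coeff k := rfl
  have hk : ((k.factorial : ℂ)) ≠ 0 := by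
    exact_mod_cast Nat.cast_ne_zero.mpr k.factorial_ne_zero
  simp only [coeff, h2, ← h, h3, nsmul_eq_mul]
  field_simp

lemma coeff_sub {f₁ f₂ : ℂ → ℂ} (h₁ : AnalyticAt ℂ f₁ 0) (h₂ : AnalyticAt ℂ f₂ 0) (k : ℕ) :
    coeff (f₁ - f₂) k = coeff f₁ k - coeff f₂ k := by
  obtain ⟨p₁, hp₁⟩ := h₁
  obtain ⟨p₂, hp₂⟩ := h₂
  rw [coeff_eq_ps hp₁, coeff_eq_ps hp₂, coeff_eq_ps (hp₁.sub hp₂)]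
  rfl

lemma coeff_bound {f : ℂ → ℂ} {r M : ℝ} (hr : 0 < r)
    (hf : DifferentiableOn ℂ f (closedBall 0 r))
    (hM : ∀ z ∈ sphere (0:ℂ) r, ‖f z‖ ≤ M) (k : ℕ) :
    ‖coeff f k‖ ≤ M / r ^ k := by
  lift r to ℝ≥0 using hr.le with R hR
  have hR0 : 0 < R := by exact_mod_cast hr
  have hp : HasFPowerSeriesOnBall f (cauchyPowerSeries f 0 R) 0 R :=
    hf.hasFPowerSeriesOnBall hR0
  rw [coeff_eq_ps hp.hasFPowerSeriesAt]
  rw [← FormalMultilinearSeries.norm_apply_eq_norm_coef]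
  have h2 := norm_cauchyPowerSeries_le f 0 R k
  have hcont : Continuous fun θ : ℝ => ‖f (circleMap 0 R θ)‖ := by
    apply Continuous.norm
    exact hf.continuousOn.comp_continuous (continuous_circleMap 0 R)
      (fun θ => sphere_subset_closedBall (circleMap_mem_sphere (0:ℂ) R.coe_nonneg θ))
  have hI : (∫ θ : ℝ in (0)..2 * π, ‖f (circleMap 0 R θ)‖) ≤ 2 * π * M := by
    have hInt : IntervalIntegrable (fun θ : ℝ => ‖f (circleMap 0 R θ)‖)
        MeasureTheory.volume 0 (2 * π) := hcont.intervalIntegrable 0 (2 * π)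
    have := intervalIntegral.integral_mono_on (by positivity : (0:ℝ) ≤ 2 * π)
      hInt intervalIntegrable_const
      (fun θ _ => hM _ (circleMap_mem_sphere (0:ℂ) R.coe_nonneg θ))
    simpa using this
  have hM0 : 0 ≤ M := by
    obtain ⟨w, hw⟩ : (sphere (0:ℂ) (R:ℝ)).Nonempty := NormedSpace.sphere_nonempty.mpr hr.le
    exact (norm_nonneg _).trans (hM w hw)
  calc ‖cauchyPowerSeries f 0 R k‖
      ≤ ((2 * π)⁻¹ * ∫ θ : ℝ in (0)..2 * π, ‖f (circleMap 0 R θ)‖) * |(R:ℝ)|⁻¹ ^ k := h2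
    _ ≤ ((2 * π)⁻¹ * (2 * π * M)) * |(R:ℝ)|⁻¹ ^ k := by
        gcongr
    _ = M / (R:ℝ) ^ k := by
        rw [abs_of_pos hr, inv_pow, ← div_eq_mul_inv]
        congr 1
        field_simp

lemma sphere_nonneg_bound {f : ℂ → ℂ} {r M : ℝ} (hr : 0 < r)
    (hM : ∀ w ∈ sphere (0:ℂ) r, ‖f w‖ ≤ M) : 0 ≤ M := by
  obtain ⟨w, hw⟩ : (sphere (0:ℂ) r).Nonempty := NormedSpace.sphere_nonempty.mpr hr.le
  exact (norm_nonneg _).trans (hM w hw)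

lemma had_term_bound {f g : ℂ → ℂ} {r₁ r₂ Mf Mg : ℝ} (hr₁ : 0 < r₁) (hr₂ : 0 < r₂)
    (hf : DifferentiableOn ℂ f (closedBall 0 r₁)) (hg : DifferentiableOn ℂ g (closedBall 0 r₂))
    (hMf : ∀ w ∈ sphere (0:ℂ) r₁, ‖f w‖ ≤ Mf) (hMg : ∀ w ∈ sphere (0:ℂ) r₂, ‖g w‖ ≤ Mg)
    (z : ℂ) (k : ℕ) :
    ‖coeff f k * coeff g k * z ^ k‖ ≤ Mf * Mg * (‖z‖ / (r₁ * r₂)) ^ k := by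
  have h1 := coeff_bound hr₁ hf hMf k
  have h2 := coeff_bound hr₂ hg hMg k
  have hMf0 : 0 ≤ Mf := sphere_nonneg_bound hr₁ hMf
  have hMg0 : 0 ≤ Mg := sphere_nonneg_bound hr₂ hMg
  calc ‖coeff f k * coeff g k * z ^ k‖ = ‖coeff f k‖ * ‖coeff g k‖ * ‖z‖ ^ k := by
        simp [norm_mul, norm_pow]
    _ ≤ (Mf / r₁ ^ k) * (Mg / r₂ ^ k) * ‖z‖ ^ k := by
        gcongr
    _ = Mf * Mg * (‖z‖ / (r₁ * r₂)) ^ k := by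
        rw [div_pow, mul_pow]
        field_simp

lemma had_summable {f g : ℂ → ℂ} {r₁ r₂ Mf Mg : ℝ} (hr₁ : 0 < r₁) (hr₂ : 0 < r₂)
    (hf : DifferentiableOn ℂ f (closedBall 0 r₁)) (hg : DifferentiableOn ℂ g (closedBall 0 r₂))
    (hMf : ∀ w ∈ sphere (0:ℂ) r₁, ‖f w‖ ≤ Mf) (hMg : ∀ w ∈ sphere (0:ℂ) r₂, ‖g w‖ ≤ Mg)
    {z : ℂ} (hz : ‖z‖ < r₁ * r₂) :
    Summable fun k => coeff f k * coeff g k * z ^ k := by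
  have hq0 : 0 ≤ ‖z‖ / (r₁ * r₂) := by positivity
  have hq1 : ‖z‖ / (r₁ * r₂) < 1 := (div_lt_one (by positivity)).mpr hz
  exact Summable.of_norm_bounded
    ((summable_geometric_of_lt_one hq0 hq1).mul_left (Mf * Mg))
    (had_term_bound hr₁ hr₂ hf hg hMf hMg z)

lemma had_norm_le {f g : ℂ → ℂ} {r₁ r₂ Mf Mg : ℝ} (hr₁ : 0 < r₁) (hr₂ : 0 < r₂)
    (hf : DifferentiableOn ℂ f (closedBall 0 r₁)) (hg : DifferentiableOn ℂ g (closedBall 0 r₂))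
    (hMf : ∀ w ∈ sphere (0:ℂ) r₁, ‖f w‖ ≤ Mf) (hMg : ∀ w ∈ sphere (0:ℂ) r₂, ‖g w‖ ≤ Mg)
    {z : ℂ} (hz : ‖z‖ < r₁ * r₂) :
    ‖hadamard f g z‖ ≤ Mf * Mg / (1 - ‖z‖ / (r₁ * r₂)) := by
  have hq0 : 0 ≤ ‖z‖ / (r₁ * r₂) := by positivity
  have hq1 : ‖z‖ / (r₁ * r₂) < 1 := (div_lt_one (by positivity)).mpr hz
  have hgeo : HasSum (fun k => Mf * Mg * (‖z‖ / (r₁ * r₂)) ^ k)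
      (Mf * Mg * (1 - ‖z‖ / (r₁ * r₂))⁻¹) :=
    (hasSum_geometric_of_lt_one hq0 hq1).mul_left (Mf * Mg)
  have := tsum_of_norm_bounded hgeo (had_term_bound hr₁ hr₂ hf hg hMf hMg z)
  rw [hadamard]
  calc ‖∑' k : ℕ, coeff f k * coeff g k * z ^ k‖
      ≤ Mf * Mg * (1 - ‖z‖ / (r₁ * r₂))⁻¹ := this
    _ = Mf * Mg / (1 - ‖z‖ / (r₁ * r₂)) := by ring

lemma had_sub {f₁ f₂ g : ℂ → ℂ} {z : ℂ}
    (h₁ : AnalyticAt ℂ f₁ 0) (h₂ : AnalyticAt ℂ f₂ 0)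
    (s₁ : Summable fun k => coeff f₁ k * coeff g k * z ^ k)
    (s₂ : Summable fun k => coeff f₂ k * coeff g k * z ^ k) :
    hadamard f₁ g z - hadamard f₂ g z = hadamard (f₁ - f₂) g z := by
  rw [hadamard, hadamard, hadamard, ← s₁.tsum_sub s₂]
  congr 1
  funext k
  rw [coeff_sub h₁ h₂]
  ring

theorem stmt3 (R₁ R₂ : ℝ) (hR₁ : 0 < R₁) (hR₂ : 0 < R₂)
    (V : Set (ℂ → ℂ)) (hV : ∀ f ∈ V, AnalyticOnNhd ℂ f (ball (0:ℂ) R₁))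
    (hc : IsCompact ((UniformOnFun.ofFun (S R₁)) '' V))
    (g : ℂ → ℂ) (hg : AnalyticOnNhd ℂ g (ball (0:ℂ) R₂)) :
    IsCompact ((UniformOnFun.ofFun (S (R₁ * R₂))) '' ((fun f => hadamard f g) '' V)) := by
  have himg : (UniformOnFun.ofFun (S (R₁ * R₂))) '' ((fun f => hadamard f g) '' V)
      = (fun F => UniformOnFun.ofFun (S (R₁ * R₂))
          (hadamard (UniformOnFun.toFun (S R₁) F) g)) '' ((UniformOnFun.ofFun (S R₁)) '' V) := by
    rw [Set.image_image, Set.image_image]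
    rfl
  rw [himg]
  apply hc.image_of_continuousOn
  intro F₀ hF₀
  obtain ⟨f₀, hf₀V, rfl⟩ := hF₀
  rw [ContinuousWithinAt, UniformOnFun.tendsto_iff_tendstoUniformlyOn]
  intro K hK
  obtain ⟨hKsub, hKcomp⟩ := hK
  have hR12 : 0 < R₁ * R₂ := mul_pos hR₁ hR₂
  obtain ⟨ρ, hρ0, hρlt, hKρ⟩ : ∃ ρ : ℝ, 0 ≤ ρ ∧ ρ < R₁ * R₂ ∧ ∀ z ∈ K, ‖z‖ ≤ ρ := by
    rcases K.eq_empty_or_nonempty with rfl | hne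
    · exact ⟨0, le_refl 0, hR12, by simp⟩
    · obtain ⟨x, hxK, hx⟩ := hKcomp.exists_isMaxOn hne continuous_norm.continuousOn
      exact ⟨‖x‖, norm_nonneg _, by simpa [mem_ball, dist_zero_right] using hKsub hxK,
        fun z hz => hx hz⟩
  -- choose radii r₁ < R₁, r₂ < R₂ with ρ < r₁ * r₂
  set c : ℝ := ρ / (R₁ * R₂) with hcdef
  have hc0 : 0 ≤ c := by positivity
  have hc1 : c < 1 := (div_lt_one hR12).mpr hρlt
  set t : ℝ := (c + 1) / 2 with htdef
  have ht0 : 0 < t := by simp only [htdef]; linarith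
  have ht1 : t < 1 := by simp only [htdef]; linarith
  set r₁ : ℝ := t * R₁ with hr₁def
  set r₂ : ℝ := t * R₂ with hr₂def
  have hr₁ : 0 < r₁ := mul_pos ht0 hR₁
  have hr₂ : 0 < r₂ := mul_pos ht0 hR₂
  have hr₁R : r₁ < R₁ := by nlinarith
  have hr₂R : r₂ < R₂ := by nlinarith
  have hρr : ρ < r₁ * r₂ := by
    have hsq : c < t ^ 2 := by
      have h4 : 0 < (1 - c) ^ 2 := pow_pos (by linarith) 2
      simp only [htdef]; nlinarith
    have hρc : ρ = c * (R₁ * R₂) := by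
      simp only [hcdef]; field_simp
    calc ρ = c * (R₁ * R₂) := hρc
      _ < t ^ 2 * (R₁ * R₂) := by nlinarith
      _ = r₁ * r₂ := by simp only [hr₁def, hr₂def]; ring
  -- differentiability on closed balls
  have hgd : DifferentiableOn ℂ g (closedBall 0 r₂) :=
    (hg.mono (closedBall_subset_ball hr₂R)).differentiableOn
  obtain ⟨Mg, hMg⟩ := (isCompact_sphere (0:ℂ) r₂).exists_bound_of_continuousOn
    (hgd.continuousOn.mono sphere_subset_closedBall)
  have hMg0 : 0 ≤ Mg := sphere_nonneg_bound hr₂ hMg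
  have hqρ : ρ / (r₁ * r₂) < 1 := (div_lt_one (by positivity)).mpr hρr
  set C : ℝ := Mg / (1 - ρ / (r₁ * r₂)) with hCdef
  have hC0 : 0 ≤ C := by
    apply div_nonneg hMg0; linarith
  -- uniform convergence of the inputs on closedBall 0 r₁
  have hmemS : closedBall (0:ℂ) r₁ ∈ S R₁ :=
    ⟨closedBall_subset_ball hr₁R, isCompact_closedBall _ _⟩
  set l := nhdsWithin ((UniformOnFun.ofFun (S R₁)) f₀) ((UniformOnFun.ofFun (S R₁)) '' V) with hldef
  have hid : Tendsto (id : (ℂ →ᵤ[S R₁] ℂ) → (ℂ →ᵤ[S R₁] ℂ)) l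
      (𝓝 (UniformOnFun.ofFun (S R₁) f₀)) := tendsto_id.mono_left nhdsWithin_le_nhds
  have hin := (UniformOnFun.tendsto_iff_tendstoUniformlyOn.mp hid) _ hmemS
  rw [Metric.tendstoUniformlyOn_iff] at hin ⊢
  intro ε hε
  have hδ : 0 < ε / (C + 1) := by positivity
  filter_upwards [hin _ hδ, self_mem_nhdsWithin] with F hF1 hF2
  obtain ⟨f', hf'V, rfl⟩ := hF2
  intro z hzK
  have hzρ : ‖z‖ ≤ ρ := hKρ z hzK
  have hzr : ‖z‖ < r₁ * r₂ := lt_of_le_of_lt hzρ hρr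
  -- both functions differentiable on closedBall 0 r₁
  have hd₀ : DifferentiableOn ℂ f₀ (closedBall 0 r₁) :=
    ((hV f₀ hf₀V).mono (closedBall_subset_ball hr₁R)).differentiableOn
  have hd' : DifferentiableOn ℂ f' (closedBall 0 r₁) :=
    ((hV f' hf'V).mono (closedBall_subset_ball hr₁R)).differentiableOn
  obtain ⟨M₀, hM₀⟩ := (isCompact_sphere (0:ℂ) r₁).exists_bound_of_continuousOn
    (hd₀.continuousOn.mono sphere_subset_closedBall)
  obtain ⟨M', hM'⟩ := (isCompact_sphere (0:ℂ) r₁).exists_bound_of_continuousOn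
    (hd'.continuousOn.mono sphere_subset_closedBall)
  have hsum₀ := had_summable hr₁ hr₂ hd₀ hgd hM₀ hMg hzr
  have hsum' := had_summable hr₁ hr₂ hd' hgd hM' hMg hzr
  have hA₀ : AnalyticAt ℂ f₀ 0 := hV f₀ hf₀V 0 (mem_ball_self hR₁)
  have hA' : AnalyticAt ℂ f' 0 := hV f' hf'V 0 (mem_ball_self hR₁)
  have hsubeq := had_sub (g := g) (z := z) hA₀ hA' hsum₀ hsum'
  have hdsub : DifferentiableOn ℂ (f₀ - f') (closedBall 0 r₁) := hd₀.sub hd'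
  have hbnd : ∀ w ∈ sphere (0:ℂ) r₁, ‖(f₀ - f') w‖ ≤ ε / (C + 1) := by
    intro w hw
    have := hF1 w (sphere_subset_closedBall hw)
    rw [dist_eq_norm] at this
    exact le_of_lt this
  have hkey := had_norm_le hr₁ hr₂ hdsub hgd hbnd hMg hzr
  rw [dist_eq_norm]
  calc ‖hadamard f₀ g z - hadamard f' g z‖
      = ‖hadamard (f₀ - f') g z‖ := by rw [hsubeq]
    _ ≤ ε / (C + 1) * Mg / (1 - ‖z‖ / (r₁ * r₂)) := hkey
    _ ≤ ε / (C + 1) * Mg / (1 - ρ / (r₁ * r₂)) := by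
        gcongr
    _ = ε / (C + 1) * C := by rw [hCdef]; ring
    _ < ε := by
        rcases eq_or_lt_of_le hC0 with h0 | h0
        · rw [← h0]; simpa using hε
        · calc ε / (C + 1) * C < ε / (C + 1) * (C + 1) := by gcongr; linarith
            _ = ε := by field_simp
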